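/- Let f be a strongly additive arithmetic function with f(p)∈{0,1} for all primes p, and let c₀>0. Suppose there is a constant K such that ∑_{p≤y} (1−f(p))·log p ≤ K·y/(log log y)^{max(1,c₀)} for all y≥16. Then there is a constant K' (depending only on K and c₀) such that F(x) = ∑_{p≤x, f(p)=0} 1/p ≤ K'·log log log x for all x≥16. -/

import Mathlib

open Finset Real

noncomputable def primesUpTo (x : ℝ) : Finset ℕ :=
  (Finset.range (⌊x⌋₊ + 1)).filter Nat.Prime

noncomputable def Ffun (f : ℕ → ℝ) (x : ℝ) : ℝ :=
  ∑ p ∈ (primesUpTo x).filter (fun p => f p = 0), (1 : ℝ) / p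

/-- `1 - 1/t ≤ log t` for `t > 0`. -/
private lemma log_ge_one_sub_inv {t : ℝ} (ht : 0 < t) : 1 - 1/t ≤ Real.log t := by
  have h := Real.log_le_sub_one_of_pos (inv_pos.mpr ht)
  rw [Real.log_inv] at h
  have : (1:ℝ)/t = t⁻¹ := one_div t
  linarith [h, this.le]


/-- `∑_{j=2}^{M} 1/j ≤ log M`. -/
private lemma aux_sum_inv_le_log (M : ℕ) :
    ∑ j ∈ Finset.Ico 2 (M+1), (1:ℝ)/j ≤ Real.log M := by
  induction M with
  | zero => simp
  | succ m ih =>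
    rcases Nat.eq_zero_or_pos m with rfl | hm
    · simp
    rw [Finset.sum_Ico_succ_top (by omega)]
    have hm1 : (0:ℝ) < (m:ℝ) := by exact_mod_cast hm
    have ht : (0:ℝ) < ((m:ℝ)+1)/(m:ℝ) := by positivity
    have hlog := log_ge_one_sub_inv ht
    rw [Real.log_div (by positivity) (ne_of_gt hm1)] at hlog
    have heq : (1:ℝ) - 1 / (((m:ℝ)+1)/(m:ℝ)) = 1/((m:ℝ)+1) := by
      field_simp
      ring
    rw [heq] at hlog
    push_cast
    push_cast at ih
    linarith

set_option maxHeartbeats 1000000 in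
theorem statement13 (f : ℕ → ℝ) (c₀ : ℝ) (hc₀ : 0 < c₀)
    (hadd : ∀ n : ℕ, 0 < n → f n = ∑ p ∈ n.primeFactors, f p)
    (h01 : ∀ p : ℕ, p.Prime → f p = 0 ∨ f p = 1)
    (K : ℝ)
    (hK : ∀ y : ℝ, 16 ≤ y →
      ∑ p ∈ primesUpTo y, (1 - f p) * Real.log p ≤
        K * y / (Real.log (Real.log y)) ^ (max 1 c₀)) :
    ∃ K' : ℝ, ∀ x : ℝ, 16 ≤ x →
      Ffun f x ≤ K' * Real.log (Real.log (Real.log x)) := by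
  have hL2 : (0.6931:ℝ) < Real.log 2 := by linarith [Real.log_two_gt_d9]
  have hL2' : Real.log 2 < 0.6932 := by linarith [Real.log_two_lt_d9]
  have hL2pos : (0:ℝ) < Real.log 2 := by linarith
  set c : ℝ := max 1 c₀ with hcdef
  have hc1 : (1:ℝ) ≤ c := le_max_left _ _
  -- basic membership facts
  have hmemP : ∀ {y : ℝ} {p : ℕ}, p ∈ primesUpTo y → p.Prime ∧ p ≤ ⌊y⌋₊ := by
    intro y p hp
    simp only [primesUpTo, Finset.mem_filter, Finset.mem_range] at hp
    exact ⟨hp.2, Nat.lt_succ_iff.mp hp.1⟩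
  -- log of primes is nonneg
  have hlogp_nonneg : ∀ p : ℕ, p.Prime → (0:ℝ) ≤ Real.log p := by
    intro p hp
    apply Real.log_nonneg
    exact_mod_cast hp.one_lt.le
  have hfle : ∀ p : ℕ, p.Prime → (0:ℝ) ≤ 1 - f p := by
    intro p hp
    rcases h01 p hp with h | h <;> rw [h] <;> norm_num
  -- the Chebyshev-type bound for the zero primes
  have hS : ∀ y : ℝ, 16 ≤ y →
      ∑ p ∈ (primesUpTo y).filter (fun p => f p = 0), Real.log p ≤
        K * y / (Real.log (Real.log y)) ^ c := by
    intro y hy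
    refine le_trans ?_ (hK y hy)
    have h1 : ∑ p ∈ (primesUpTo y).filter (fun p => f p = 0), Real.log p
        = ∑ p ∈ (primesUpTo y).filter (fun p => f p = 0), (1 - f p) * Real.log p := by
      refine Finset.sum_congr rfl ?_
      intro p hp
      rw [Finset.mem_filter] at hp
      rw [hp.2]; ring
    rw [h1]
    refine Finset.sum_le_sum_of_subset_of_nonneg (Finset.filter_subset _ _) ?_
    intro p hp _
    exact mul_nonneg (hfle p (hmemP hp).1) (hlogp_nonneg p (hmemP hp).1)
  -- positivity of log log 16
  have hlog16 : Real.log 16 = 4 * Real.log 2 := by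
    rw [show (16:ℝ) = 2^4 by norm_num, Real.log_pow]; push_cast; ring
  have hloglog16 : (1:ℝ) ≤ Real.log (Real.log 16) := by
    rw [hlog16]
    rw [Real.le_log_iff_exp_le (by linarith)]
    have h1 : Real.exp 1 < 2.7182818286 := Real.exp_one_lt_d9
    linarith
  -- K is nonnegative
  have hK0 : 0 ≤ K := by
    have h16 := hK 16 le_rfl
    have hP : (0:ℝ) < (Real.log (Real.log 16)) ^ c :=
      Real.rpow_pos_of_pos (by linarith) c
    have hnn : (0:ℝ) ≤ ∑ p ∈ primesUpTo 16, (1 - f p) * Real.log p := by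
      refine Finset.sum_nonneg ?_
      intro p hp
      exact mul_nonneg (hfle p (hmemP hp).1) (hlogp_nonneg p (hmemP hp).1)
    have hR : (0:ℝ) ≤ K * 16 / (Real.log (Real.log 16)) ^ c := le_trans hnn h16
    rcases div_nonneg_iff.mp hR with ⟨h1, _⟩ | ⟨_, h2⟩
    · linarith
    · linarith
  refine ⟨17000 + 1000 * K, ?_⟩
  intro x hx
  have hx0 : (0:ℝ) < x := by linarith
  set n := ⌊x⌋₊ with hn
  have hn16 : 16 ≤ n := Nat.le_floor (by exact_mod_cast hx)
  set N := Nat.log 2 n with hN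
  have hN4 : 4 ≤ N := by
    have h16 : Nat.log 2 16 = 4 := by
      rw [show (16:ℕ) = 2^4 by norm_num, Nat.log_pow (by norm_num)]
    calc 4 = Nat.log 2 16 := h16.symm
    _ ≤ N := Nat.log_mono_right hn16
  set M := Nat.log 2 N with hM
  have hM2 : 2 ≤ M := by
    have h4 : Nat.log 2 4 = 2 := by
      rw [show (4:ℕ) = 2^2 by norm_num, Nat.log_pow (by norm_num)]
    calc 2 = Nat.log 2 4 := h4.symm
    _ ≤ M := Nat.log_mono_right hN4
  set Zx := (primesUpTo x).filter (fun p => f p = 0) with hZx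
  have hZmem : ∀ {p : ℕ}, p ∈ Zx → p.Prime ∧ p ≤ n ∧ f p = 0 := by
    intro p hp
    rw [hZx, Finset.mem_filter] at hp
    exact ⟨(hmemP hp.1).1, (hmemP hp.1).2, hp.2⟩
  -- fiberwise decomposition over k = Nat.log 2 p
  have hmaps : ∀ p ∈ Zx, Nat.log 2 p ∈ Finset.range (N+1) := by
    intro p hp
    rw [Finset.mem_range, Nat.lt_succ_iff]
    exact Nat.log_mono_right (hZmem hp).2.1
  have hdecomp : Ffun f x = ∑ k ∈ Finset.range (N+1),
      ∑ p ∈ Zx.filter (fun p => Nat.log 2 p = k), (1:ℝ)/p :=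
    (Finset.sum_fiberwise_of_maps_to hmaps _).symm
  -- small fibers
  have hsmall : ∀ k ∈ Finset.range 5,
      ∑ p ∈ Zx.filter (fun p => Nat.log 2 p = k), (1:ℝ)/p ≤ 32 := by
    intro k hk
    rw [Finset.mem_range] at hk
    have hsub : Zx.filter (fun p => Nat.log 2 p = k) ⊆ Finset.range 32 := by
      intro p hp
      rw [Finset.mem_filter] at hp
      have h1 : p < 2 ^ (Nat.log 2 p + 1) := Nat.lt_pow_succ_log_self (by norm_num) p
      rw [hp.2] at h1
      have h2 : (2:ℕ) ^ (k+1) ≤ 2^5 := Nat.pow_le_pow_right (by norm_num) (by omega)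
      rw [Finset.mem_range]
      omega
    calc ∑ p ∈ Zx.filter (fun p => Nat.log 2 p = k), (1:ℝ)/p
        ≤ ∑ _p ∈ Zx.filter (fun p => Nat.log 2 p = k), (1:ℝ) := by
          refine Finset.sum_le_sum ?_
          intro p hp
          have hprime := (hZmem (Finset.mem_filter.mp hp).1).1
          have hp1 : (1:ℝ) ≤ (p:ℝ) := by exact_mod_cast hprime.one_lt.le
          rw [div_le_one (by linarith)]
          exact hp1
      _ = ((Zx.filter (fun p => Nat.log 2 p = k)).card : ℝ) := by
          rw [Finset.sum_const, nsmul_eq_mul, mul_one]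
      _ ≤ 32 := by
          have := Finset.card_le_card hsub
          rw [Finset.card_range] at this
          exact_mod_cast this
  -- fibers for k ≥ 5
  have hfib : ∀ k : ℕ, 5 ≤ k →
      ∑ p ∈ Zx.filter (fun p => Nat.log 2 p = k), (1:ℝ)/p
        ≤ 4*K/Real.log 2 * (1/((k:ℝ) * Real.log k)) := by
    intro k hk
    have hkR : (5:ℝ) ≤ (k:ℝ) := by exact_mod_cast hk
    have hkpos : (0:ℝ) < (k:ℝ) := by linarith
    have hlogk : 2 * Real.log 2 ≤ Real.log k := by
      have h4 : Real.log 4 ≤ Real.log k := Real.log_le_log (by norm_num) (by linarith)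
      have h4' : Real.log 4 = 2 * Real.log 2 := by
        rw [show (4:ℝ) = 2^(2:ℕ) by norm_num, Real.log_pow]; norm_num
      linarith
    have hlogkpos : 0 < Real.log k := by linarith
    have hlog2k1 : Real.log ((2:ℝ)^(k+1)) = ((k:ℝ)+1) * Real.log 2 := by
      rw [Real.log_pow]; push_cast; ring
    have haeq : Real.log (Real.log ((2:ℝ)^(k+1)))
        = Real.log ((k:ℝ)+1) + Real.log (Real.log 2) := by
      rw [hlog2k1, Real.log_mul (by positivity) (ne_of_gt hL2pos)]
    have hlogk1 : Real.log 6 ≤ Real.log ((k:ℝ)+1) := Real.log_le_log (by norm_num) (by linarith)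
    have hlog6 : (1.69:ℝ) ≤ Real.log 6 := by
      rw [show (6:ℝ) = 2*3 by norm_num, Real.log_mul (by norm_num) (by norm_num)]
      have h3 : (1:ℝ) ≤ Real.log 3 := by
        rw [Real.le_log_iff_exp_le (by norm_num)]
        linarith [Real.exp_one_lt_d9]
      linarith
    have hlogL2 : -0.4428 ≤ Real.log (Real.log 2) := by
      have h1 := Real.log_le_sub_one_of_pos (inv_pos.mpr hL2pos)
      rw [Real.log_inv] at h1
      have h2 : (Real.log 2)⁻¹ * Real.log 2 = 1 := inv_mul_cancel₀ (ne_of_gt hL2pos)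
      nlinarith
    have ha1 : 1 ≤ Real.log (Real.log ((2:ℝ)^(k+1))) := by rw [haeq]; linarith
    have hahalf : Real.log k / 2 ≤ Real.log (Real.log ((2:ℝ)^(k+1))) := by
      have hmono : Real.log k ≤ Real.log ((k:ℝ)+1) := Real.log_le_log hkpos (by linarith)
      rw [haeq]; linarith
    have hac : Real.log k / 2 ≤ (Real.log (Real.log ((2:ℝ)^(k+1)))) ^ c := by
      calc Real.log k / 2 ≤ Real.log (Real.log ((2:ℝ)^(k+1))) := hahalf
      _ = (Real.log (Real.log ((2:ℝ)^(k+1)))) ^ (1:ℝ) := (Real.rpow_one _).symm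
      _ ≤ _ := Real.rpow_le_rpow_of_exponent_le ha1 hc1
    have hacpos : 0 < (Real.log (Real.log ((2:ℝ)^(k+1)))) ^ c :=
      lt_of_lt_of_le (by linarith) hac
    have hDpos : (0:ℝ) < (2:ℝ)^k * ((k:ℝ) * Real.log 2) := by positivity
    have h16le : (16:ℝ) ≤ (2:ℝ)^(k+1) := by
      calc (16:ℝ) = 2^(4:ℕ) := by norm_num
      _ ≤ 2^(k+1) := by
          apply pow_le_pow_right₀ (by norm_num)
          omega
    have hsub : Zx.filter (fun p => Nat.log 2 p = k) ⊆
        (primesUpTo ((2:ℝ)^(k+1))).filter (fun p => f p = 0) := by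
      intro p hp
      rw [Finset.mem_filter] at hp
      obtain ⟨hpZ, hplog⟩ := hp
      have h3 := hZmem hpZ
      have hplt : p < 2^(k+1) := by
        have h := Nat.lt_pow_succ_log_self (show 1 < 2 by norm_num) p
        rwa [hplog] at h
      rw [Finset.mem_filter]
      refine ⟨?_, h3.2.2⟩
      simp only [primesUpTo, Finset.mem_filter, Finset.mem_range]
      refine ⟨?_, h3.1⟩
      have hfloor : ⌊((2:ℝ)^(k+1))⌋₊ = 2^(k+1) := by
        rw [show ((2:ℝ)^(k+1)) = ((2^(k+1):ℕ):ℝ) by push_cast; ring, Nat.floor_natCast]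
      omega
    have hterm : ∀ p ∈ Zx.filter (fun p => Nat.log 2 p = k),
        (1:ℝ)/p ≤ Real.log p / ((2:ℝ)^k * ((k:ℝ) * Real.log 2)) := by
      intro p hp
      rw [Finset.mem_filter] at hp
      have hprime := (hZmem hp.1).1
      have hppos : (0:ℝ) < (p:ℝ) := by exact_mod_cast hprime.pos
      have h2k : ((2:ℝ))^k ≤ (p:ℝ) := by
        have h := Nat.pow_log_le_self 2 hprime.pos.ne'
        rw [hp.2] at h
        exact_mod_cast h
      have hlp : (k:ℝ) * Real.log 2 ≤ Real.log p := by
        have h := Real.log_le_log (by positivity : (0:ℝ) < (2:ℝ)^k) h2k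
        rwa [Real.log_pow] at h
      rw [div_le_div_iff₀ hppos hDpos]
      have hknn : (0:ℝ) ≤ (k:ℝ)*Real.log 2 := by positivity
      have hmm := mul_le_mul h2k hlp hknn hppos.le
      rw [one_mul, mul_comm (Real.log (p:ℝ))]
      linarith
    have hlogne : Real.log (k:ℝ) ≠ 0 := ne_of_gt hlogkpos
    have hkne : (k:ℝ) ≠ 0 := ne_of_gt hkpos
    have hL2ne : Real.log 2 ≠ 0 := ne_of_gt hL2pos
    calc ∑ p ∈ Zx.filter (fun p => Nat.log 2 p = k), (1:ℝ)/p
        ≤ ∑ p ∈ Zx.filter (fun p => Nat.log 2 p = k),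
            Real.log p / ((2:ℝ)^k * ((k:ℝ) * Real.log 2)) := Finset.sum_le_sum hterm
      _ = (∑ p ∈ Zx.filter (fun p => Nat.log 2 p = k), Real.log p)
            / ((2:ℝ)^k * ((k:ℝ) * Real.log 2)) := by rw [Finset.sum_div]
      _ ≤ (∑ p ∈ (primesUpTo ((2:ℝ)^(k+1))).filter (fun p => f p = 0), Real.log p)
            / ((2:ℝ)^k * ((k:ℝ) * Real.log 2)) := by
          apply (div_le_div_iff_of_pos_right hDpos).mpr
          refine Finset.sum_le_sum_of_subset_of_nonneg hsub ?_
          intro p hp _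
          exact hlogp_nonneg p (hmemP (Finset.mem_filter.mp hp).1).1
      _ ≤ (K * (2:ℝ)^(k+1) / (Real.log (Real.log ((2:ℝ)^(k+1))))^c)
            / ((2:ℝ)^k * ((k:ℝ) * Real.log 2)) := by
          exact (div_le_div_iff_of_pos_right hDpos).mpr (hS _ h16le)
      _ ≤ (K * (2:ℝ)^(k+1) / (Real.log k / 2)) / ((2:ℝ)^k * ((k:ℝ) * Real.log 2)) := by
          apply (div_le_div_iff_of_pos_right hDpos).mpr
          rw [div_le_div_iff₀ hacpos (by linarith : (0:ℝ) < Real.log k / 2)]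
          have hnum : (0:ℝ) ≤ K * (2:ℝ)^(k+1) := mul_nonneg hK0 (by positivity)
          exact mul_le_mul_of_nonneg_left hac hnum
      _ = 4*K/Real.log 2 * (1/((k:ℝ) * Real.log k)) := by
          rw [pow_succ]
          field_simp
          ring
  -- split the range
  have hsplit : ∑ k ∈ Finset.range (N+1),
        (∑ p ∈ Zx.filter (fun p => Nat.log 2 p = k), (1:ℝ)/p)
      = (∑ k ∈ Finset.range 5, ∑ p ∈ Zx.filter (fun p => Nat.log 2 p = k), (1:ℝ)/p)
        + ∑ k ∈ Finset.Ico 5 (N+1), ∑ p ∈ Zx.filter (fun p => Nat.log 2 p = k), (1:ℝ)/p := by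
    simp only [Finset.range_eq_Ico]
    exact (Finset.sum_Ico_consecutive _ (by omega) (by omega)).symm
  -- second fiberwise decomposition
  have hmaps2 : ∀ k ∈ Finset.Ico 5 (N+1), Nat.log 2 k ∈ Finset.range (M+1) := by
    intro k hk
    rw [Finset.mem_Ico] at hk
    rw [Finset.mem_range, Nat.lt_succ_iff]
    exact Nat.log_mono_right (by omega)
  have hD : ∑ k ∈ Finset.Ico 5 (N+1), 1/((k:ℝ) * Real.log k)
      ≤ (1/Real.log 2) * Real.log M := by
    rw [← Finset.sum_fiberwise_of_maps_to hmaps2]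
    have hstep : ∀ j ∈ Finset.range (M+1),
        (∑ k ∈ (Finset.Ico 5 (N+1)).filter (fun k => Nat.log 2 k = j),
            1/((k:ℝ) * Real.log k))
        ≤ if 2 ≤ j then (1/Real.log 2) * (1/(j:ℝ)) else 0 := by
      intro j _
      by_cases hj : 2 ≤ j
      · rw [if_pos hj]
        have hjR : (2:ℝ) ≤ (j:ℝ) := by exact_mod_cast hj
        have hjpos : (0:ℝ) < (j:ℝ) := by linarith
        have hbpos : (0:ℝ) < (2:ℝ)^j * ((j:ℝ) * Real.log 2) := by positivity
        have hterm2 : ∀ k ∈ (Finset.Ico 5 (N+1)).filter (fun k => Nat.log 2 k = j),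
            1/((k:ℝ) * Real.log k) ≤ 1/((2:ℝ)^j * ((j:ℝ) * Real.log 2)) := by
          intro k hk
          rw [Finset.mem_filter, Finset.mem_Ico] at hk
          have hk5 : 5 ≤ k := hk.1.1
          have h2j : ((2:ℝ))^j ≤ (k:ℝ) := by
            have h := Nat.pow_log_le_self 2 (show k ≠ 0 by omega)
            rw [hk.2] at h
            exact_mod_cast h
          have hkpos : (0:ℝ) < (k:ℝ) := by
            have : (0:ℝ) < (2:ℝ)^j := by positivity
            linarith
          have hlk : (j:ℝ) * Real.log 2 ≤ Real.log k := by
            have h := Real.log_le_log (by positivity : (0:ℝ) < (2:ℝ)^j) h2j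
            rwa [Real.log_pow] at h
          have hjL2pos : (0:ℝ) < (j:ℝ) * Real.log 2 := by positivity
          apply one_div_le_one_div_of_le hbpos
          exact mul_le_mul h2j hlk hjL2pos.le hkpos.le
        have hcard : (((Finset.Ico 5 (N+1)).filter (fun k => Nat.log 2 k = j)).card : ℝ)
            ≤ (2:ℝ)^j := by
          have hsub2 : (Finset.Ico 5 (N+1)).filter (fun k => Nat.log 2 k = j)
              ⊆ Finset.Ico (2^j) (2^(j+1)) := by
            intro k hk
            rw [Finset.mem_filter, Finset.mem_Ico] at hk
            rw [Finset.mem_Ico]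
            constructor
            · have h := Nat.pow_log_le_self 2 (show k ≠ 0 by omega)
              rwa [hk.2] at h
            · have h := Nat.lt_pow_succ_log_self (show 1 < 2 by norm_num) k
              rwa [hk.2] at h
          have h1 := Finset.card_le_card hsub2
          rw [Nat.card_Ico] at h1
          have h2 : (2:ℕ)^(j+1) = 2^j * 2 := pow_succ 2 j
          have h3 : ((Finset.Ico 5 (N+1)).filter (fun k => Nat.log 2 k = j)).card ≤ 2^j := by
            omega
          calc (((Finset.Ico 5 (N+1)).filter (fun k => Nat.log 2 k = j)).card : ℝ)
              ≤ ((2^j : ℕ) : ℝ) := by exact_mod_cast h3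
            _ = (2:ℝ)^j := by push_cast; ring
        calc ∑ k ∈ (Finset.Ico 5 (N+1)).filter (fun k => Nat.log 2 k = j),
              1/((k:ℝ) * Real.log k)
            ≤ (((Finset.Ico 5 (N+1)).filter (fun k => Nat.log 2 k = j)).card : ℕ)
                • (1/((2:ℝ)^j * ((j:ℝ) * Real.log 2))) :=
              Finset.sum_le_card_nsmul _ _ _ hterm2
          _ = (((Finset.Ico 5 (N+1)).filter (fun k => Nat.log 2 k = j)).card : ℝ)
                * (1/((2:ℝ)^j * ((j:ℝ) * Real.log 2))) := by rw [nsmul_eq_mul]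
          _ ≤ (2:ℝ)^j * (1/((2:ℝ)^j * ((j:ℝ) * Real.log 2))) := by
              apply mul_le_mul_of_nonneg_right hcard
              positivity
          _ = (1/Real.log 2) * (1/(j:ℝ)) := by
              field_simp
      · rw [if_neg hj]
        have hempty : (Finset.Ico 5 (N+1)).filter (fun k => Nat.log 2 k = j) = ∅ := by
          rw [Finset.eq_empty_iff_forall_notMem]
          intro k hk
          rw [Finset.mem_filter, Finset.mem_Ico] at hk
          have h1 := Nat.lt_pow_succ_log_self (show 1 < 2 by norm_num) k
          rw [hk.2] at h1
          have h2 : (2:ℕ)^(j+1) ≤ 2^2 := Nat.pow_le_pow_right (by norm_num) (by omega)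
          omega
        rw [hempty, Finset.sum_empty]
    calc ∑ j ∈ Finset.range (M+1),
          ∑ k ∈ (Finset.Ico 5 (N+1)).filter (fun k => Nat.log 2 k = j),
            1/((k:ℝ) * Real.log k)
        ≤ ∑ j ∈ Finset.range (M+1),
            (if 2 ≤ j then (1/Real.log 2) * (1/(j:ℝ)) else 0) :=
          Finset.sum_le_sum hstep
      _ = ∑ j ∈ (Finset.range (M+1)).filter (fun j => 2 ≤ j),
            (1/Real.log 2) * (1/(j:ℝ)) := (Finset.sum_filter _ _).symm
      _ = ∑ j ∈ Finset.Ico 2 (M+1), (1/Real.log 2) * (1/(j:ℝ)) := by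
          congr 1
          ext j
          simp only [Finset.mem_filter, Finset.mem_range, Finset.mem_Ico]
          omega
      _ = (1/Real.log 2) * ∑ j ∈ Finset.Ico 2 (M+1), (1:ℝ)/(j:ℝ) := by
          rw [Finset.mul_sum]
      _ ≤ (1/Real.log 2) * Real.log M := by
          apply mul_le_mul_of_nonneg_left (aux_sum_inv_le_log M)
          positivity
  -- numerics
  have hLxb : (2.772:ℝ) ≤ Real.log x := by
    have h := Real.log_le_log (by norm_num : (0:ℝ) < 16) hx
    rw [hlog16] at h
    linarith
  have hLxpos : (0:ℝ) < Real.log x := by linarith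
  have hLLxb : (1.01:ℝ) ≤ Real.log (Real.log x) := by
    rw [Real.le_log_iff_exp_le (by linarith)]
    have h1 : Real.exp 1.01 = Real.exp 1 * Real.exp 0.01 := by
      rw [← Real.exp_add]; norm_num
    have h2 : (1:ℝ) - 0.01 ≤ Real.exp (-0.01) := by
      have := Real.add_one_le_exp (-0.01)
      linarith
    have h3 : Real.exp 0.01 * Real.exp (-0.01) = 1 := by
      rw [← Real.exp_add]; norm_num
    have h4 : (0:ℝ) < Real.exp 0.01 := Real.exp_pos _
    have h5 : Real.exp 0.01 ≤ 1/0.99 := by nlinarith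
    have h6 : Real.exp 1 < 2.7182818286 := Real.exp_one_lt_d9
    have h7 : Real.exp 1 * Real.exp 0.01 ≤ 2.7182818286 * (1/0.99) :=
      mul_le_mul h6.le h5 h4.le (by norm_num)
    calc Real.exp 1.01 = Real.exp 1 * Real.exp 0.01 := h1
      _ ≤ 2.7182818286 * (1/0.99) := h7
      _ ≤ 2.772 := by norm_num
      _ ≤ Real.log x := hLxb
  have hLLxpos : (0:ℝ) < Real.log (Real.log x) := by linarith
  have hLb : (0.0099:ℝ) ≤ Real.log (Real.log (Real.log x)) := by
    have h1 : Real.log 1.01 ≤ Real.log (Real.log (Real.log x)) :=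
      Real.log_le_log (by norm_num) hLLxb
    have h2 := log_ge_one_sub_inv (show (0:ℝ) < 1.01 by norm_num)
    have h3 : (0.0099:ℝ) ≤ 1 - 1/1.01 := by norm_num
    linarith
  -- bound on M
  have hNpos : (0:ℝ) < (N:ℝ) := by
    have : (4:ℝ) ≤ (N:ℝ) := by exact_mod_cast hN4
    linarith
  have hMpos : (2:ℝ) ≤ (M:ℝ) := by exact_mod_cast hM2
  have hMN : (M:ℝ) * Real.log 2 ≤ Real.log N := by
    have h2M : (2:ℕ)^M ≤ N := Nat.pow_log_le_self 2 (by omega)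
    have h := Real.log_le_log (by positivity : (0:ℝ) < (2:ℝ)^M)
      (by exact_mod_cast h2M : ((2:ℝ))^M ≤ (N:ℝ))
    rwa [Real.log_pow] at h
  have hNx : (N:ℝ) * Real.log 2 ≤ Real.log x := by
    have h2N : (2:ℕ)^N ≤ n := Nat.pow_log_le_self 2 (by omega)
    have hnx : (n:ℝ) ≤ x := Nat.floor_le hx0.le
    have h2N' : ((2:ℝ))^N ≤ (n:ℝ) := by exact_mod_cast h2N
    have h := Real.log_le_log (by positivity : (0:ℝ) < (2:ℝ)^N) (h2N'.trans hnx)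
    rwa [Real.log_pow] at h
  have hlogN : Real.log N ≤ Real.log (Real.log x) - Real.log (Real.log 2) := by
    have hNle : (N:ℝ) ≤ Real.log x / Real.log 2 := by
      rw [le_div_iff₀ hL2pos]; exact hNx
    have h := Real.log_le_log hNpos hNle
    rwa [Real.log_div (ne_of_gt hLxpos) (ne_of_gt hL2pos)] at h
  have hlogL2 : -0.4428 ≤ Real.log (Real.log 2) := by
    have h1 := Real.log_le_sub_one_of_pos (inv_pos.mpr hL2pos)
    rw [Real.log_inv] at h1
    have h2 : (Real.log 2)⁻¹ * Real.log 2 = 1 := inv_mul_cancel₀ (ne_of_gt hL2pos)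
    nlinarith
  have hMb : (M:ℝ) ≤ 2.1 * Real.log (Real.log x) := by
    nlinarith [hMN, hlogN, hlogL2, hLLxb, hMpos]
  have hlogM : Real.log M ≤ 1.1 + Real.log (Real.log (Real.log x)) := by
    have h1 : Real.log M ≤ Real.log (2.1 * Real.log (Real.log x)) :=
      Real.log_le_log (by linarith) hMb
    rw [Real.log_mul (by norm_num) (ne_of_gt hLLxpos)] at h1
    have h2 : Real.log 2.1 ≤ 1.1 := by
      have := Real.log_le_sub_one_of_pos (show (0:ℝ) < 2.1 by norm_num)
      linarith
    linarith
  have hlogM0 : (0:ℝ) ≤ Real.log M := Real.log_nonneg (by linarith)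
  -- assemble
  have hsmallsum : ∑ k ∈ Finset.range 5,
      (∑ p ∈ Zx.filter (fun p => Nat.log 2 p = k), (1:ℝ)/p) ≤ 160 := by
    calc ∑ k ∈ Finset.range 5, (∑ p ∈ Zx.filter (fun p => Nat.log 2 p = k), (1:ℝ)/p)
        ≤ ∑ _k ∈ Finset.range 5, (32:ℝ) := Finset.sum_le_sum hsmall
      _ = 160 := by simp; norm_num
  have hbigsum : ∑ k ∈ Finset.Ico 5 (N+1),
      (∑ p ∈ Zx.filter (fun p => Nat.log 2 p = k), (1:ℝ)/p)
      ≤ (4*K/Real.log 2) * ((1/Real.log 2) * Real.log M) := by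
    calc ∑ k ∈ Finset.Ico 5 (N+1), (∑ p ∈ Zx.filter (fun p => Nat.log 2 p = k), (1:ℝ)/p)
        ≤ ∑ k ∈ Finset.Ico 5 (N+1), 4*K/Real.log 2 * (1/((k:ℝ) * Real.log k)) :=
          Finset.sum_le_sum (fun k hk => hfib k (Finset.mem_Ico.mp hk).1)
      _ = (4*K/Real.log 2) * ∑ k ∈ Finset.Ico 5 (N+1), 1/((k:ℝ) * Real.log k) := by
          rw [Finset.mul_sum]
      _ ≤ (4*K/Real.log 2) * ((1/Real.log 2) * Real.log M) := by
          apply mul_le_mul_of_nonneg_left hD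
          exact div_nonneg (by linarith) hL2pos.le
  have hKM : (0:ℝ) ≤ K * Real.log M := mul_nonneg hK0 hlogM0
  have e1 : (4*K/Real.log 2) * ((1/Real.log 2) * Real.log M)
      ≤ 8.33 * K * Real.log M := by
    have heq : (4*K/Real.log 2) * ((1/Real.log 2) * Real.log M)
        = 4*K*Real.log M / (Real.log 2 * Real.log 2) := by ring
    rw [heq, div_le_iff₀ (by positivity)]
    have hsq : (0.4803:ℝ) ≤ Real.log 2 * Real.log 2 := by nlinarith
    nlinarith [mul_le_mul_of_nonneg_left hsq hKM]
  have e2 : 8.33 * K * Real.log M ≤ 8.33 * K * (1.1 + Real.log (Real.log (Real.log x))) := by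
    apply mul_le_mul_of_nonneg_left hlogM
    nlinarith
  have e3 : 8.33 * K * (1.1 + Real.log (Real.log (Real.log x)))
      ≤ 1000 * K * Real.log (Real.log (Real.log x)) := by
    nlinarith [mul_nonneg hK0 (show (0:ℝ) ≤ 991.67 * Real.log (Real.log (Real.log x)) - 9.163
      by linarith)]
  have e4 : (160:ℝ) ≤ 17000 * Real.log (Real.log (Real.log x)) := by linarith
  have hFf : Ffun f x ≤ 160 + (4*K/Real.log 2) * ((1/Real.log 2) * Real.log M) := by
    rw [hdecomp, hsplit]
    exact add_le_add hsmallsum hbigsum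
  calc Ffun f x ≤ 160 + (4*K/Real.log 2) * ((1/Real.log 2) * Real.log M) := hFf
    _ ≤ (17000 + 1000 * K) * Real.log (Real.log (Real.log x)) := by nlinarith
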